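/- Impartial scoring play games form a non-trivial monoid but not a group under the sequential join: the impartial game G = {1, {0|0|0} | 0 | {0|0|0}, −1} has no inverse; i.e., there is no impartial game Y such that G ▷ Y ▷ P ≈ P for all impartial games P. -/

import Mathlib

inductive SGame : Type where
  | mk (score : ℝ) (L R : List SGame)

namespace SGame

def score : SGame → ℝ | .mk s _ _ => s
def L : SGame → List SGame | .mk _ l _ => l
def R : SGame → List SGame | .mk _ _ r => r

mutual
  noncomputable def leftScore : SGame → ℝ
    | .mk s l _ => ((l.attach.map fun x => rightScore x.1).maximum).getD s
  termination_by g => sizeOf g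
  decreasing_by
    have := List.sizeOf_lt_of_mem x.2
    simp only [SGame.mk.sizeOf_spec]
    omega
  noncomputable def rightScore : SGame → ℝ
    | .mk s _ r => ((r.attach.map fun x => leftScore x.1).minimum).getD s
  termination_by g => sizeOf g
  decreasing_by
    have := List.sizeOf_lt_of_mem x.2
    simp only [SGame.mk.sizeOf_spec]
    omega
end

/-- Conjunctive sum: move in all components simultaneously. -/
def conj : SGame → SGame → SGame
  | .mk s l r, .mk t l' r' =>
    .mk (s + t)
      (l.attach.flatMap fun x => l'.attach.map fun y => conj x.1 y.1)
      (r.attach.flatMap fun x => r'.attach.map fun y => conj x.1 y.1)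
termination_by G H => sizeOf G + sizeOf H
decreasing_by
  all_goals
    have h1 := List.sizeOf_lt_of_mem x.2
    have h2 := List.sizeOf_lt_of_mem y.2
    simp only [SGame.mk.sizeOf_spec]
    omega

/-- Selective sum: move in any nonempty subset of the components. -/
def sel : SGame → SGame → SGame
  | .mk s l r, .mk t l' r' =>
    .mk (s + t)
      ((l.attach.map fun x => sel x.1 (.mk t l' r')) ++
       (l'.attach.map fun y => sel (.mk s l r) y.1) ++
       (l.attach.flatMap fun x => l'.attach.map fun y => sel x.1 y.1))
      ((r.attach.map fun x => sel x.1 (.mk t l' r')) ++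
       (r'.attach.map fun y => sel (.mk s l r) y.1) ++
       (r.attach.flatMap fun x => r'.attach.map fun y => sel x.1 y.1))
termination_by G H => sizeOf G + sizeOf H
decreasing_by
  all_goals first
  | (have h1 := List.sizeOf_lt_of_mem x.2
     have h2 := List.sizeOf_lt_of_mem y.2
     simp only [SGame.mk.sizeOf_spec]; omega)
  | (have h1 := List.sizeOf_lt_of_mem x.2
     simp only [SGame.mk.sizeOf_spec]; omega)
  | (have h2 := List.sizeOf_lt_of_mem y.2
     simp only [SGame.mk.sizeOf_spec]; omega)

/-- Add `a` points (for Left) to every score of the game. -/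
def addScore (a : ℝ) : SGame → SGame
  | .mk s l r => .mk (a + s) (l.attach.map fun x => addScore a x.1)
      (r.attach.map fun x => addScore a x.1)
termination_by g => sizeOf g
decreasing_by
  all_goals
    have := List.sizeOf_lt_of_mem x.2
    simp only [SGame.mk.sizeOf_spec]; omega

/-- The negative of a game: swap the roles of Left and Right and negate all scores. -/
def neg : SGame → SGame
  | .mk s l r => .mk (-s) (r.attach.map fun x => neg x.1) (l.attach.map fun x => neg x.1)
termination_by g => sizeOf g
decreasing_by
  all_goals
    have := List.sizeOf_lt_of_mem x.2
    simp only [SGame.mk.sizeOf_spec]; omega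

/-- Impartial scoring game. -/
def Impartial : SGame → Prop
  | .mk s l r =>
    (l = [] ↔ r = []) ∧
    (∀ x ∈ l, ∃ y ∈ r, addScore (-s) x = neg (addScore (-s) y)) ∧
    (∀ x ∈ l.attach, Impartial x.1) ∧ (∀ y ∈ r.attach, Impartial y.1)
termination_by g => sizeOf g
decreasing_by
  all_goals
    first
    | (have := List.sizeOf_lt_of_mem x.2
       simp only [SGame.mk.sizeOf_spec]; omega)
    | (have := List.sizeOf_lt_of_mem y.2
       simp only [SGame.mk.sizeOf_spec]; omega)

/-- Sequential join: play all of `G` first, then continue in `H`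
    with the accumulated score. -/
def seq : SGame → SGame → SGame
  | .mk s [] [], H => addScore s H
  | .mk s l r, H =>
    .mk (s + H.score) (l.attach.map fun x => seq x.1 H)
      (r.attach.map fun x => seq x.1 H)
termination_by G _ => sizeOf G
decreasing_by
  all_goals
    have := List.sizeOf_lt_of_mem x.2
    simp only [SGame.mk.sizeOf_spec]; omega

/-- Outcome classes for scoring games. -/
inductive Outcome : Type where
  | L | R | N | P | Tie
deriving DecidableEq

open Classical in
/-- The outcome class of a scoring game, determined by the signs of the
    optimal final scores with Left, resp. Right, moving first. -/
noncomputable def outcome (G : SGame) : Outcome :=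
  if 0 < leftScore G ∧ rightScore G < 0 then .N
  else if leftScore G < 0 ∧ 0 < rightScore G then .P
  else if leftScore G = 0 ∧ rightScore G = 0 then .Tie
  else if 0 ≤ leftScore G ∧ 0 ≤ rightScore G then .L
  else .R

@[simp] theorem getD_withBot_bot (d : ℝ) : Option.getD (⊥ : WithBot ℝ) d = d := rfl

@[simp] theorem getD_withBot_coe (x d : ℝ) : Option.getD ((x : ℝ) : WithBot ℝ) d = x := rfl

@[simp] theorem getD_withTop_top (d : ℝ) : Option.getD (⊤ : WithTop ℝ) d = d := rfl

@[simp] theorem getD_withTop_coe (x d : ℝ) : Option.getD ((x : ℝ) : WithTop ℝ) d = x := rfl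

theorem maximum_map_add (a : ℝ) (L : List ℝ) :
    (L.map (fun x => a + x)).maximum = L.maximum.map (fun x => a + x) := by
  induction L with
  | nil => simp
  | cons x xs ih =>
    rw [List.map_cons, List.maximum_cons, List.maximum_cons, ih]
    cases h : xs.maximum with
    | bot => simp [max_eq_left bot_le]
    | coe y =>
      simp only [WithBot.map_coe, ← WithBot.coe_max]
      rw [max_add_add_left]

theorem minimum_map_add (a : ℝ) (L : List ℝ) :
    (L.map (fun x => a + x)).minimum = L.minimum.map (fun x => a + x) := by
  induction L with
  | nil => simp
  | cons x xs ih =>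
    rw [List.map_cons, List.minimum_cons, List.minimum_cons, ih]
    cases h : xs.minimum with
    | top => simp [min_eq_left le_top]
    | coe y =>
      simp only [WithTop.map_coe, ← WithTop.coe_min]
      rw [min_add_add_left]

theorem unbot'_map_add (a d : ℝ) (m : WithBot ℝ) :
    (m.map (fun x => a + x)).getD (a + d) = a + m.getD d := by
  cases m <;> simp [← WithBot.coe_add, ← WithTop.coe_add]

theorem untop'_map_add (a d : ℝ) (m : WithTop ℝ) :
    (m.map (fun x => a + x)).getD (a + d) = a + m.getD d := by
  cases m <;> simp [← WithBot.coe_add, ← WithTop.coe_add]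

theorem addScore_spec (a : ℝ) : ∀ X : SGame,
    leftScore (addScore a X) = a + leftScore X ∧
    rightScore (addScore a X) = a + rightScore X
  | .mk s l r => by
    have hl : ∀ x : {x // x ∈ l}, x ∈ l.attach →
        rightScore (addScore a x.1) = a + rightScore x.1 := fun x _ =>
      (addScore_spec a x.1).2
    have hr : ∀ x : {x // x ∈ r}, x ∈ r.attach →
        leftScore (addScore a x.1) = a + leftScore x.1 := fun x _ =>
      (addScore_spec a x.1).1
    constructor
    · rw [addScore, leftScore, leftScore]
      rw [show ((l.attach.map fun x => addScore a x.1).attach.map fun x => rightScore x.1)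
          = l.attach.map fun x => rightScore (addScore a x.1) by
        simp [List.map_subtype]]
      rw [List.map_congr_left hl]
      rw [show (l.attach.map fun x => a + rightScore x.1)
          = (l.attach.map fun x => rightScore x.1).map (fun t => a + t) by
        simp [Function.comp]]
      rw [maximum_map_add, unbot'_map_add]
    · rw [addScore, rightScore, rightScore]
      rw [show ((r.attach.map fun x => addScore a x.1).attach.map fun x => leftScore x.1)
          = r.attach.map fun x => leftScore (addScore a x.1) by
        simp [List.map_subtype]]
      rw [List.map_congr_left hr]
      rw [show (r.attach.map fun x => a + leftScore x.1)
          = (r.attach.map fun x => leftScore x.1).map (fun t => a + t) by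
        simp [Function.comp]]
      rw [minimum_map_add, untop'_map_add]
termination_by X => sizeOf X
decreasing_by
  all_goals
    have := List.sizeOf_lt_of_mem x.2
    simp only [SGame.mk.sizeOf_spec]; omega
theorem seqP0_spec : ∀ X : SGame,
    leftScore (seq X (.mk 0 [] [])) = leftScore X ∧
    rightScore (seq X (.mk 0 [] [])) = rightScore X
  | .mk s [] [] => by
    simp [seq, addScore, leftScore, rightScore]
  | .mk s (x0 :: l0) r => by
    have hl : ∀ t ∈ x0 :: l0, rightScore (seq t (SGame.mk 0 [] [])) = rightScore t :=
      fun t ht => (seqP0_spec t).2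
    have hr : ∀ t ∈ r, leftScore (seq t (SGame.mk 0 [] [])) = leftScore t :=
      fun t ht => (seqP0_spec t).1
    constructor
    · rw [seq, leftScore, leftScore]
      case x_2 => simp
      simp only [List.map_subtype, List.unattach_attach, List.map_map, Function.comp_def]
      rw [List.map_congr_left hl]
      simp [score]
    · rw [seq, rightScore, rightScore]
      case x_2 => simp
      simp only [List.map_subtype, List.unattach_attach, List.map_map, Function.comp_def]
      rw [List.map_congr_left hr]
      simp [score]
  | .mk s [] (y0 :: r0) => by
    have hr : ∀ t ∈ y0 :: r0, leftScore (seq t (SGame.mk 0 [] [])) = leftScore t :=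
      fun t ht => (seqP0_spec t).1
    constructor
    · rw [seq, leftScore, leftScore]
      case x_2 => simp
      simp [score]
      rfl
    · rw [seq, rightScore, rightScore]
      case x_2 => simp
      simp only [List.map_subtype, List.unattach_attach, List.map_map, Function.comp_def]
      rw [List.map_congr_left hr]
      simp [score]
termination_by X => sizeOf X
decreasing_by
  all_goals
    first
    | (have := List.sizeOf_lt_of_mem ht
       simp only [SGame.mk.sizeOf_spec]; omega)
    | (rename_i ht'
       have := List.sizeOf_lt_of_mem ht'
       simp only [SGame.mk.sizeOf_spec]; omega)
theorem unbot'_maximum_pair (u v d : ℝ) : (List.maximum [u, v]).getD d = max u v := by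
  rw [List.maximum_cons, List.maximum_singleton, ← WithBot.coe_max]; rfl

theorem untop'_minimum_pair (u v d : ℝ) : (List.minimum [u, v]).getD d = min u v := by
  rw [List.minimum_cons, List.minimum_singleton, ← WithTop.coe_min]; rfl

theorem z_scores (Y : SGame) :
    leftScore (seq (SGame.mk 0 [SGame.mk 0 [] []] [SGame.mk 0 [] []]) Y) = rightScore Y ∧
    rightScore (seq (SGame.mk 0 [SGame.mk 0 [] []] [SGame.mk 0 [] []]) Y) = leftScore Y := by
  constructor
  · rw [seq]
    case x_2 => simp
    rw [leftScore]
    simp only [List.map_subtype, List.unattach_attach, List.map_map, Function.comp_def,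
      List.map_cons, List.map_nil, seq, (addScore_spec 0 Y).2, score, zero_add,
      List.maximum_singleton, getD_withBot_coe]
  · rw [seq]
    case x_2 => simp
    rw [rightScore]
    simp only [List.map_subtype, List.unattach_attach, List.map_map, Function.comp_def,
      List.map_cons, List.map_nil, seq, (addScore_spec 0 Y).1, score, zero_add,
      List.minimum_singleton, getD_withTop_coe]

theorem G_scores (Y : SGame) :
    leftScore (seq (SGame.mk 0 [SGame.mk 1 [] [], SGame.mk 0 [SGame.mk 0 [] []] [SGame.mk 0 [] []]]
        [SGame.mk 0 [SGame.mk 0 [] []] [SGame.mk 0 [] []], SGame.mk (-1) [] []]) Y)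
      = max (1 + rightScore Y) (leftScore Y) ∧
    rightScore (seq (SGame.mk 0 [SGame.mk 1 [] [], SGame.mk 0 [SGame.mk 0 [] []] [SGame.mk 0 [] []]]
        [SGame.mk 0 [SGame.mk 0 [] []] [SGame.mk 0 [] []], SGame.mk (-1) [] []]) Y)
      = min (rightScore Y) (-1 + leftScore Y) := by
  constructor
  · rw [seq]
    case x_2 => simp
    rw [leftScore]
    simp only [List.map_subtype, List.unattach_attach, List.map_map, Function.comp_def,
      List.map_cons, List.map_nil]
    rw [show seq (SGame.mk 1 [] []) Y = addScore 1 Y by rw [seq]]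
    rw [(addScore_spec 1 Y).2, (z_scores Y).2, unbot'_maximum_pair]
  · rw [seq]
    case x_2 => simp
    rw [rightScore]
    simp only [List.map_subtype, List.unattach_attach, List.map_map, Function.comp_def,
      List.map_cons, List.map_nil]
    rw [show seq (SGame.mk (-1) [] []) Y = addScore (-1) Y by rw [seq]]
    rw [(addScore_spec (-1) Y).1, (z_scores Y).1, untop'_minimum_pair]

end SGame

open SGame in
/-- Impartial scoring games do not form a group under the sequential join:
the impartial game `G = {1, {0|0|0} | 0 | {0|0|0}, −1}` has no inverse, i.e. there
is no impartial `Y` with `G ▷ Y ▷ P ≈ P` (equal outcomes) for all impartial `P`. -/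
theorem seq_impartial_not_group :
    let z : SGame := .mk 0 [.mk 0 [] []] [.mk 0 [] []]
    let G : SGame := .mk 0 [.mk 1 [] [], z] [z, .mk (-1) [] []]
    ¬ ∃ Y : SGame, Impartial Y ∧
        ∀ P : SGame, Impartial P → outcome (seq (seq G Y) P) = outcome P := by
  intro z G
  rintro ⟨Y, hY, h⟩
  have hP : Impartial (SGame.mk 0 [] []) := by
    rw [Impartial]; simp
  have h0 := h _ hP
  have hL0 : leftScore (SGame.mk 0 [] []) = 0 := by rw [leftScore]; simp
  have hR0 : rightScore (SGame.mk 0 [] []) = 0 := by rw [rightScore]; simp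
  have hLS : leftScore (seq (seq G Y) (SGame.mk 0 [] []))
      = max (1 + rightScore Y) (leftScore Y) := by
    rw [(seqP0_spec (seq G Y)).1, (G_scores Y).1]
  have hRS : rightScore (seq (seq G Y) (SGame.mk 0 [] []))
      = min (rightScore Y) (-1 + leftScore Y) := by
    rw [(seqP0_spec (seq G Y)).2, (G_scores Y).2]
  rw [outcome, outcome, hL0, hR0, hLS, hRS] at h0
  have h1 := le_max_left (1 + rightScore Y) (leftScore Y)
  have h2 := min_le_left (rightScore Y) (-1 + leftScore Y)
  split_ifs at h0 with c1 c2 c3 c4 <;>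
    simp_all <;> linarith
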